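/- Let k ≥ 4, Ψ̂ : ℝ^k → ℝ a rapidly decreasing function (for every θ ≥ 0 there exists C(θ) with |Ψ̂(ξ)| ≤ C(θ)|ξ|^{−θ} for all ξ ≠ 0). Fix δ ∈ (0,2), μ ∈ (0, (2−δ)/(k−2)), ε = n^{−μ}. Then the tail sum A₁ = ∑_{β ∈ ℕ^k, max βᵢ ≥ n} Ψ̂(εβ)²/(π⁴|β|⁴) satisfies A₁ ≤ C n^{−δ} for a constant C independent of n. -/

import Mathlib

open scoped BigOperators

/-- The Euclidean norm on `ℝᵏ`. -/
noncomputable def eucNorm {k : ℕ} (x : Fin k → ℝ) : ℝ := Real.sqrt (∑ i, x i ^ 2)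

lemma summable_pi_prod (w : ℕ → ℝ) (hw : Summable w) (h0 : ∀ m, 0 ≤ w m) (k : ℕ) :
    Summable (fun β : Fin k → ℕ => ∏ i, w (β i)) := by
  induction k with
  | zero =>
    simpa using (summable_of_finite_support (Set.toFinite _) :
      Summable (fun _ : Fin 0 → ℕ => (1:ℝ)))
  | succ k ih =>
    have h1 : (0:ℕ → ℝ) ≤ w := h0
    have h2 : (0:(Fin k → ℕ) → ℝ) ≤ fun β : Fin k → ℕ => ∏ i, w (β i) :=
      fun β => Finset.prod_nonneg fun i _ => h0 _
    have hF := Summable.mul_of_nonneg hw ih h1 h2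
    have := ((Fin.consEquiv (fun _ : Fin (k+1) => ℕ)).symm.summable_iff).2 hF
    refine this.congr fun β => ?_
    simp [Fin.consEquiv, Fin.prod_univ_succ, Fin.tail]

lemma core_ineq {k n : ℕ} {θ : ℝ} (hθ : (k:ℝ) - 2 ≤ θ) (hk : 1 ≤ k) (hn : 1 ≤ n)
    (β : Fin k → ℕ) (hβ : ∀ i, 1 ≤ β i) {j : Fin k} (hj : n ≤ β j) :
    (∑ i, ((β i : ℝ))^2) ^ (-(θ+2)) ≤
      (n:ℝ) ^ (2*(k:ℝ) - 4 - 2*θ) * ∏ i, (((β i : ℝ))^2)⁻¹ := by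
  have hβpos : ∀ i, (0:ℝ) < (β i : ℝ) := fun i => by exact_mod_cast (hβ i)
  set S : ℝ := ∑ i, ((β i : ℝ))^2 with hS
  have hSpos : 0 < S := by
    refine Finset.sum_pos (fun i _ => pow_pos (hβpos i) 2) ⟨j, Finset.mem_univ j⟩
  have hterm : ∀ i, ((β i : ℝ))^2 ≤ S := fun i =>
    Finset.single_le_sum (f := fun i => ((β i:ℝ))^2) (fun i _ => sq_nonneg _) (Finset.mem_univ i)
  set P : ℝ := ∏ i, ((β i : ℝ))^2 with hP
  have hPpos : 0 < P := Finset.prod_pos fun i _ => pow_pos (hβpos i) 2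
  have hnpos : (0:ℝ) < (n:ℝ) := by exact_mod_cast hn
  have hnj : (n:ℝ) ≤ (β j : ℝ) := by exact_mod_cast hj
  have hexp0 : 0 ≤ 2*θ + 4 - 2*(k:ℝ) := by nlinarith
  have key : (n:ℝ) ^ (2*θ + 4 - 2*(k:ℝ)) * P ≤ S ^ (θ+2) := by
    have h1 : P = ((β j : ℝ))^2 * ∏ i ∈ Finset.univ.erase j, ((β i : ℝ))^2 :=
      (Finset.mul_prod_erase _ _ (Finset.mem_univ j)).symm
    have h2 : ∏ i ∈ Finset.univ.erase j, ((β i : ℝ))^2 ≤ S ^ (k-1) := by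
      calc ∏ i ∈ Finset.univ.erase j, ((β i : ℝ))^2
          ≤ ∏ _i ∈ Finset.univ.erase j, S := by
            refine Finset.prod_le_prod (fun i _ => sq_nonneg _) (fun i _ => hterm i)
        _ = S ^ (k-1) := by
            rw [Finset.prod_const, Finset.card_erase_of_mem (Finset.mem_univ j),
              Finset.card_univ, Fintype.card_fin]
    have h3 : (n:ℝ) ^ (2*θ + 4 - 2*(k:ℝ)) * ((β j : ℝ))^2 ≤ S ^ (θ + 3 - (k:ℝ)) := by
      have hb1 : (1:ℝ) ≤ (β j : ℝ) := by exact_mod_cast hβ j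
      calc (n:ℝ) ^ (2*θ + 4 - 2*(k:ℝ)) * ((β j : ℝ))^2
          ≤ ((β j:ℝ)) ^ (2*θ + 4 - 2*(k:ℝ)) * ((β j : ℝ))^2 := by
            exact mul_le_mul_of_nonneg_right (Real.rpow_le_rpow hnpos.le hnj hexp0) (sq_nonneg _)
        _ = ((β j:ℝ)) ^ (2*θ + 4 - 2*(k:ℝ) + 2) := by
            rw [Real.rpow_add (hβpos j)]
            norm_num [Real.rpow_two]
        _ = (((β j:ℝ))^2) ^ (θ + 3 - (k:ℝ)) := by
            rw [← Real.rpow_natCast ((β j:ℝ)) 2, ← Real.rpow_mul (hβpos j).le]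
            norm_num; ring_nf
        _ ≤ S ^ (θ + 3 - (k:ℝ)) := by
            refine Real.rpow_le_rpow (by positivity) (hterm j) (by nlinarith)
    calc (n:ℝ) ^ (2*θ + 4 - 2*(k:ℝ)) * P
        = ((n:ℝ) ^ (2*θ + 4 - 2*(k:ℝ)) * ((β j : ℝ))^2) *
            ∏ i ∈ Finset.univ.erase j, ((β i : ℝ))^2 := by rw [h1]; ring
      _ ≤ S ^ (θ + 3 - (k:ℝ)) * S ^ (k-1) := by
          refine mul_le_mul h3 h2 (Finset.prod_nonneg fun i _ => sq_nonneg _) (by positivity)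
      _ = S ^ (θ + 2) := by
          rw [← Real.rpow_natCast S (k-1), ← Real.rpow_add hSpos]
          congr 1
          have : ((k - 1 : ℕ) : ℝ) = (k:ℝ) - 1 := by
            push_cast [Nat.cast_sub hk]; ring
          rw [this]; ring
  have hL : 0 < (n:ℝ) ^ (2*θ + 4 - 2*(k:ℝ)) * P := by positivity
  have hinv : (S ^ (θ+2))⁻¹ ≤ ((n:ℝ) ^ (2*θ + 4 - 2*(k:ℝ)) * P)⁻¹ :=
    inv_anti₀ hL key
  calc S ^ (-(θ+2)) = (S ^ (θ+2))⁻¹ := by rw [Real.rpow_neg hSpos.le]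
    _ ≤ ((n:ℝ) ^ (2*θ + 4 - 2*(k:ℝ)) * P)⁻¹ := hinv
    _ = (n:ℝ) ^ (2*(k:ℝ) - 4 - 2*θ) * P⁻¹ := by
        rw [mul_inv, ← Real.rpow_neg hnpos.le]
        ring_nf
    _ = (n:ℝ) ^ (2*(k:ℝ) - 4 - 2*θ) * ∏ i, (((β i : ℝ))^2)⁻¹ := by
        rw [hP, Finset.prod_inv_distrib]

/-- for rapidly decreasing `Ψ̂`, `δ ∈ (0,2)`, `μ ∈ (0,(2-δ)/(k-2))` and
`ε = n^{-μ}`, the tail sum `A₁ = ∑_{β ∈ ℕᵏ, max βᵢ ≥ n} Ψ̂(εβ)²/(π⁴|β|⁴)`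
satisfies `A₁ ≤ C n^{-δ}` with `C` independent of `n`. -/
theorem stmt15 (k : ℕ) (hk : 4 ≤ k) (Psi : (Fin k → ℝ) → ℝ)
    (hPsi : ∀ θ : ℝ, 0 ≤ θ → ∃ Cθ : ℝ, ∀ ξ : Fin k → ℝ, ξ ≠ 0 →
      |Psi ξ| ≤ Cθ * eucNorm ξ ^ (-θ))
    (δ μ : ℝ) (hδ : δ ∈ Set.Ioo (0:ℝ) 2) (hμ : μ ∈ Set.Ioo (0:ℝ) ((2 - δ) / ((k:ℝ) - 2))) :
    ∃ C : ℝ, ∀ n : ℕ, 1 ≤ n →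
      ∑' β : {β : Fin k → ℕ // (∀ i, 1 ≤ β i) ∧ ∃ i, n ≤ β i},
          Psi (fun i => (n : ℝ) ^ (-μ) * ((β : Fin k → ℕ) i : ℝ)) ^ 2 /
            (Real.pi ^ 4 * (∑ i, ((β : Fin k → ℕ) i : ℝ) ^ 2) ^ 2) ≤
        C * (n : ℝ) ^ (-δ) := by
  obtain ⟨hδ0, hδ2⟩ := hδ
  obtain ⟨hμ0, hμ1⟩ := hμ
  have hk4 : (4:ℝ) ≤ (k:ℝ) := by exact_mod_cast hk
  have hk2 : (0:ℝ) < (k:ℝ) - 2 := by linarith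
  have hμlt1 : μ < 1 := by
    have : (2 - δ) / ((k:ℝ) - 2) < 1 := by
      rw [div_lt_one hk2]; linarith
    linarith
  have h1μ : (0:ℝ) < 1 - μ := by linarith
  set θ : ℝ := (δ + 2*(k:ℝ) - 4) / (2*(1-μ)) with hθdef
  have hnum : (0:ℝ) < δ + 2*(k:ℝ) - 4 := by linarith
  have hθpos : 0 < θ := div_pos hnum (by linarith)
  have hident : 2*θ*(1-μ) = δ + 2*(k:ℝ) - 4 := by
    rw [hθdef]; field_simp
  have hθk : (k:ℝ) - 2 ≤ θ := by
    have h2 : (δ + 2*(k:ℝ) - 4) / 2 ≤ θ := by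
      rw [hθdef]
      exact div_le_div_of_nonneg_left hnum.le (by linarith) (by linarith)
    have h3 : (k:ℝ) - 2 ≤ (δ + 2*(k:ℝ) - 4) / 2 := by linarith
    linarith
  obtain ⟨Cθ, hCθ⟩ := hPsi θ hθpos.le
  set w : ℕ → ℝ := fun m => (((m:ℝ))^2)⁻¹ with hw
  have hw0 : ∀ m, 0 ≤ w m := fun m => inv_nonneg.2 (sq_nonneg _)
  have hwsum : Summable w := Real.summable_nat_pow_inv.mpr one_lt_two
  have hZsum := summable_pi_prod w hwsum hw0 k
  set Z : ℝ := ∑' β : Fin k → ℕ, ∏ i, w (β i) with hZ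
  have hZ0 : 0 ≤ Z := tsum_nonneg fun β => Finset.prod_nonneg fun i _ => hw0 _
  have hπ : (0:ℝ) < Real.pi ^ 4 := by positivity
  set K : ℝ := Cθ^2 / Real.pi^4 with hK
  have hK0 : 0 ≤ K := div_nonneg (sq_nonneg _) hπ.le
  refine ⟨K * Z, fun n hn => ?_⟩
  have hnpos : (0:ℝ) < (n:ℝ) := by exact_mod_cast hn
  have hnδ : (0:ℝ) < (n:ℝ) ^ (-δ) := Real.rpow_pos_of_pos hnpos _
  set s : Set (Fin k → ℕ) := {β | (∀ i, 1 ≤ β i) ∧ ∃ i, n ≤ β i} with hs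
  -- pointwise bound
  have hpt : ∀ b : {β : Fin k → ℕ // (∀ i, 1 ≤ β i) ∧ ∃ i, n ≤ β i},
      Psi (fun i => (n : ℝ) ^ (-μ) * ((b : Fin k → ℕ) i : ℝ)) ^ 2 /
        (Real.pi ^ 4 * (∑ i, ((b : Fin k → ℕ) i : ℝ) ^ 2) ^ 2)
      ≤ K * (n:ℝ) ^ (-δ) * ∏ i, w ((b : Fin k → ℕ) i) := by
    rintro ⟨β, hall, j, hj⟩
    have hβpos : ∀ i, (0:ℝ) < (β i : ℝ) := fun i => by exact_mod_cast (hall i)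
    set S : ℝ := ∑ i, ((β i : ℝ))^2 with hS
    have hSpos : 0 < S :=
      Finset.sum_pos (fun i _ => pow_pos (hβpos i) 2) ⟨j, Finset.mem_univ j⟩
    set ε : ℝ := (n:ℝ) ^ (-μ) with hε
    have hεpos : 0 < ε := Real.rpow_pos_of_pos hnpos _
    set ξ : Fin k → ℝ := fun i => ε * (β i : ℝ) with hξ
    have hξ0 : ξ ≠ 0 := by
      intro h
      have h2 : (0:ℝ) < ξ j := mul_pos hεpos (hβpos j)
      rw [h] at h2
      simp at h2
    have hEnorm : eucNorm ξ = ε * Real.sqrt S := by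
      have : ∑ i, ξ i ^ 2 = ε^2 * S := by
        simp only [hξ, mul_pow, hS, Finset.mul_sum]
      rw [eucNorm, this, Real.sqrt_mul (sq_nonneg ε), Real.sqrt_sq hεpos.le]
    have hbound := hCθ ξ hξ0
    rw [hEnorm] at hbound
    have hsq : Psi ξ ^ 2 ≤ Cθ^2 * ((ε * Real.sqrt S) ^ (-θ))^2 := by
      have h1 : Psi ξ ^ 2 = |Psi ξ| ^ 2 := (sq_abs _).symm
      rw [h1, ← mul_pow]
      exact pow_le_pow_left₀ (abs_nonneg _) hbound 2
    have hrw : ((ε * Real.sqrt S) ^ (-θ))^2 = (n:ℝ) ^ (2*μ*θ) * S ^ (-θ) := by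
      have hb0 : (0:ℝ) ≤ ε * Real.sqrt S := by positivity
      rw [← Real.rpow_natCast ((ε * Real.sqrt S) ^ (-θ)) 2, ← Real.rpow_mul hb0,
        Real.mul_rpow hεpos.le (Real.sqrt_nonneg S)]
      congr 1
      · rw [hε, ← Real.rpow_mul hnpos.le]
        norm_num
        ring_nf
      · rw [Real.sqrt_eq_rpow, ← Real.rpow_mul hSpos.le]
        congr 1
        push_cast
        ring
    have hSne : S ≠ 0 := hSpos.ne'
    have hπne : Real.pi ≠ 0 := Real.pi_ne_zero
    have h5 : Psi ξ ^ 2 ≤ Cθ^2 * ((n:ℝ) ^ (2*μ*θ) * S ^ (-θ)) := by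
      rw [← hrw]; exact hsq
    have hcore := core_ineq (n := n) hθk (by omega) hn β hall hj
    rw [← hS] at hcore
    show Psi ξ ^ 2 / (Real.pi ^ 4 * S ^ 2) ≤ K * (n:ℝ) ^ (-δ) * ∏ i, w (β i)
    calc Psi ξ ^ 2 / (Real.pi ^ 4 * S ^ 2)
        ≤ Cθ^2 * ((n:ℝ) ^ (2*μ*θ) * S ^ (-θ)) / (Real.pi ^ 4 * S ^ 2) := by
          gcongr
      _ = K * (n:ℝ) ^ (2*μ*θ) * (S ^ (-θ) / S ^ 2) := by
          rw [hK]; field_simp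
      _ = K * (n:ℝ) ^ (2*μ*θ) * S ^ (-(θ+2)) := by
          congr 1
          rw [div_eq_mul_inv, ← Real.rpow_natCast S 2, ← Real.rpow_neg hSpos.le,
            ← Real.rpow_add hSpos]
          congr 1
          push_cast
          ring
      _ ≤ K * (n:ℝ) ^ (2*μ*θ) * ((n:ℝ) ^ (2*(k:ℝ) - 4 - 2*θ) * ∏ i, (((β i : ℝ))^2)⁻¹) := by
          exact mul_le_mul_of_nonneg_left hcore (by positivity)
      _ = K * ((n:ℝ) ^ (2*μ*θ) * (n:ℝ) ^ (2*(k:ℝ) - 4 - 2*θ)) * ∏ i, (((β i : ℝ))^2)⁻¹ := by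
          ring
      _ = K * (n:ℝ) ^ (-δ) * ∏ i, w (β i) := by
          have hexp : 2*μ*θ + (2*(k:ℝ) - 4 - 2*θ) = -δ := by linear_combination -hident
          rw [← Real.rpow_add hnpos, hexp]
  -- assemble the tsum estimate
  have hg_sum : Summable (fun b : {β : Fin k → ℕ // (∀ i, 1 ≤ β i) ∧ ∃ i, n ≤ β i} =>
      K * (n:ℝ) ^ (-δ) * ∏ i, w ((b : Fin k → ℕ) i)) := by
    exact Summable.mul_left _ (hZsum.subtype s)
  have hf_sum : Summable (fun b : {β : Fin k → ℕ // (∀ i, 1 ≤ β i) ∧ ∃ i, n ≤ β i} =>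
      Psi (fun i => (n : ℝ) ^ (-μ) * ((b : Fin k → ℕ) i : ℝ)) ^ 2 /
        (Real.pi ^ 4 * (∑ i, ((b : Fin k → ℕ) i : ℝ) ^ 2) ^ 2)) := by
    refine Summable.of_nonneg_of_le (fun b => ?_) hpt hg_sum
    have hb : (0:ℝ) < Real.pi ^ 4 * (∑ i, ((b : Fin k → ℕ) i : ℝ) ^ 2) ^ 2 := by
      have h1 : (0:ℝ) < ∑ i, ((b : Fin k → ℕ) i : ℝ) ^ 2 := by
        obtain ⟨hall, j, hj⟩ := b.2
        refine Finset.sum_pos (fun i _ => ?_) ⟨j, Finset.mem_univ j⟩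
        have : (0:ℝ) < ((b : Fin k → ℕ) i : ℝ) := by exact_mod_cast hall i
        positivity
      positivity
    exact div_nonneg (sq_nonneg _) hb.le
  calc ∑' b : {β : Fin k → ℕ // (∀ i, 1 ≤ β i) ∧ ∃ i, n ≤ β i},
        Psi (fun i => (n : ℝ) ^ (-μ) * ((b : Fin k → ℕ) i : ℝ)) ^ 2 /
          (Real.pi ^ 4 * (∑ i, ((b : Fin k → ℕ) i : ℝ) ^ 2) ^ 2)
      ≤ ∑' b : {β : Fin k → ℕ // (∀ i, 1 ≤ β i) ∧ ∃ i, n ≤ β i},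
          K * (n:ℝ) ^ (-δ) * ∏ i, w ((b : Fin k → ℕ) i) :=
        Summable.tsum_le_tsum hpt hf_sum hg_sum
    _ = K * (n:ℝ) ^ (-δ) * ∑' b : s, ∏ i, w ((b : Fin k → ℕ) i) := tsum_mul_left
    _ ≤ K * (n:ℝ) ^ (-δ) * Z := by
        refine mul_le_mul_of_nonneg_left ?_ (by positivity)
        exact Summable.tsum_subtype_le (fun β : Fin k → ℕ => ∏ i, w (β i)) s
          (fun β => Finset.prod_nonneg fun i _ => hw0 _) hZsum
    _ = K * Z * (n:ℝ) ^ (-δ) := by ring
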